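/- Let T = −(e₅∧e₆∧e₇ − e₁∧e₃∧e₅ + e₃∧e₄∧e₇ + e₁∧e₄∧e₆) and σ^T = (1/2) Σ_i (e_i⌟T)∧(e_i⌟T). Then σ^T = 2(e₃∧e₄∧e₅∧e₆ − e₁∧e₄∧e₅∧e₇ − e₁∧e₃∧e₆∧e₇), and the 4-form (1/4)dT + (1/2)σ^T with dT = −4 e₁∧e₃∧e₆∧e₇ acts in the 7-dimensional spin representation as a symmetric endomorphism with eigenvalues (2, −4, 2, 0, 2, 0, 2, −4). -/

import Mathlib

noncomputable section
open scoped BigOperators RealInnerProductSpace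

/-- Kronecker delta on `Fin 7`. -/
def kd (a b : Fin 7) : ℝ := if a = b then 1 else 0

/-- Components of the 3-form `e_a ∧ e_b ∧ e_c` on `ℝ⁷`. -/
def trip (a b c : Fin 7) : Fin 7 → Fin 7 → Fin 7 → ℝ := fun i j k =>
  Matrix.det !![kd a i, kd a j, kd a k; kd b i, kd b j, kd b k; kd c i, kd c j, kd c k]

/-- Components of the 4-form `e_a ∧ e_b ∧ e_c ∧ e_d` on `ℝ⁷`. -/
def quad (a b c d : Fin 7) : Fin 7 → Fin 7 → Fin 7 → Fin 7 → ℝ := fun i j k l =>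
  Matrix.det !![kd a i, kd a j, kd a k, kd a l;
                kd b i, kd b j, kd b k, kd b l;
                kd c i, kd c j, kd c k, kd c l;
                kd d i, kd d j, kd d k, kd d l]

/-- The standard G₂ 3-form
`ω³ = e₁₂₇ + e₁₃₅ − e₁₄₆ − e₂₃₆ − e₂₄₅ + e₃₄₇ + e₅₆₇` (components, 0-indexed). -/
def w3 : Fin 7 → Fin 7 → Fin 7 → ℝ := fun i j k =>
  trip 0 1 6 i j k + trip 0 2 4 i j k - trip 0 3 5 i j k - trip 1 2 5 i j k
    - trip 1 3 4 i j k + trip 2 3 6 i j k + trip 4 5 6 i j k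

/-- Levi-Civita symbol on seven indices. -/
def eps (f : Fin 7 → Fin 7) : ℝ :=
  ∏ p : Fin 7 × Fin 7,
    if p.1 < p.2 then ((Int.sign ((f p.2 : ℤ) - (f p.1 : ℤ)) : ℤ) : ℝ) else 1

/-- Hodge star of a 3-form on oriented Euclidean `ℝ⁷` (components). -/
def star3 (T : Fin 7 → Fin 7 → Fin 7 → ℝ) : Fin 7 → Fin 7 → Fin 7 → Fin 7 → ℝ :=
  fun j₁ j₂ j₃ j₄ =>
    (1 / 6) * ∑ i₁, ∑ i₂, ∑ i₃, T i₁ i₂ i₃ * eps ![i₁, i₂, i₃, j₁, j₂, j₃, j₄]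

/-- Hodge star of a 4-form on oriented Euclidean `ℝ⁷` (components). -/
def star4 (A : Fin 7 → Fin 7 → Fin 7 → Fin 7 → ℝ) : Fin 7 → Fin 7 → Fin 7 → ℝ :=
  fun j₁ j₂ j₃ =>
    (1 / 24) * ∑ i₁, ∑ i₂, ∑ i₃, ∑ i₄, A i₁ i₂ i₃ i₄ * eps ![i₁, i₂, i₃, i₄, j₁, j₂, j₃]

/-- Hodge star of a 5-form on oriented Euclidean `ℝ⁷` (components). -/
def star5 (A : Fin 7 → Fin 7 → Fin 7 → Fin 7 → Fin 7 → ℝ) : Fin 7 → Fin 7 → ℝ :=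
  fun j₁ j₂ =>
    (1 / 120) * ∑ i₁, ∑ i₂, ∑ i₃, ∑ i₄, ∑ i₅,
      A i₁ i₂ i₃ i₄ i₅ * eps ![i₁, i₂, i₃, i₄, i₅, j₁, j₂]

/-- Inner product of 2-forms for which the `e_i ∧ e_j` (i<j) are orthonormal. -/
def ip2 (α β : Fin 7 → Fin 7 → ℝ) : ℝ := (1 / 2) * ∑ a, ∑ b, α a b * β a b

/-- Wedge product of two 1-forms (components). -/
def wedge11 (α β : Fin 7 → ℝ) : Fin 7 → Fin 7 → ℝ := fun a b => α a * β b - α b * β a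

/-- Wedge product of a 1-form with a 3-form (components). -/
def wedge13 (α : Fin 7 → ℝ) (ω : Fin 7 → Fin 7 → Fin 7 → ℝ) :
    Fin 7 → Fin 7 → Fin 7 → Fin 7 → ℝ := fun a b c d =>
  α a * ω b c d - α b * ω a c d + α c * ω a b d - α d * ω a b c

/-- Wedge product of two 2-forms (components). -/
def wedge22 (α β : Fin 7 → Fin 7 → ℝ) : Fin 7 → Fin 7 → Fin 7 → Fin 7 → ℝ :=
  fun a b c d =>
    α a b * β c d - α a c * β b d + α a d * β b c
      + β a b * α c d - β a c * α b d + β a d * α b c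

/-- Wedge product of a 3-form with a 2-form (components). -/
def wedge32 (ω : Fin 7 → Fin 7 → Fin 7 → ℝ) (α : Fin 7 → Fin 7 → ℝ) :
    Fin 7 → Fin 7 → Fin 7 → Fin 7 → Fin 7 → ℝ := fun a b c d e =>
  ω a b c * α d e - ω a b d * α c e + ω a b e * α c d + ω a c d * α b e
    - ω a c e * α b d + ω a d e * α b c - ω b c d * α a e + ω b c e * α a d
    - ω b d e * α a c + ω c d e * α a b

/-- Interior product of a vector with a 4-form (components). -/
def contr1 (X : Fin 7 → ℝ) (A : Fin 7 → Fin 7 → Fin 7 → Fin 7 → ℝ) :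
    Fin 7 → Fin 7 → Fin 7 → ℝ := fun a b c => ∑ i, X i * A i a b c

/-- Interior product of a vector with a 3-form (components). -/
def contr13 (X : Fin 7 → ℝ) (T : Fin 7 → Fin 7 → Fin 7 → ℝ) : Fin 7 → Fin 7 → ℝ :=
  fun a b => ∑ i, X i * T i a b

/-- The orthogonal projection of a 2-form onto `Λ²₇ = {X ⌟ ω³}`:
`pr_m(α) = (1/3) Σᵢ (α, eᵢ ⌟ ω³) (eᵢ ⌟ ω³)`. -/
def prm (α : Fin 7 → Fin 7 → ℝ) : Fin 7 → Fin 7 → ℝ := fun a b =>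
  (1 / 3) * ∑ i, ip2 α (fun x y => w3 i x y) * w3 i a b


/-! ### Auxiliary integer-valued mirrors of the component functions -/

def kdZ (a b : Fin 7) : ℤ := if a = b then 1 else 0

def tripZ (a b c i j k : Fin 7) : ℤ :=
  kdZ a i * kdZ b j * kdZ c k - kdZ a i * kdZ b k * kdZ c j
    - kdZ a j * kdZ b i * kdZ c k + kdZ a j * kdZ b k * kdZ c i
    + kdZ a k * kdZ b i * kdZ c j - kdZ a k * kdZ b j * kdZ c i

def quadZ (a b c d i j k l : Fin 7) : ℤ :=
  kdZ a i * tripZ b c d j k l - kdZ b i * tripZ a c d j k l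
    + kdZ c i * tripZ a b d j k l - kdZ d i * tripZ a b c j k l

def TZ (i j k : Fin 7) : ℤ :=
  -(tripZ 4 5 6 i j k - tripZ 0 2 4 i j k + tripZ 2 3 6 i j k + tripZ 0 3 5 i j k)

lemma kd_cast (a b : Fin 7) : kd a b = ((kdZ a b : ℤ) : ℝ) := by
  unfold kd kdZ; split <;> simp

lemma trip_cast (a b c i j k : Fin 7) : trip a b c i j k = ((tripZ a b c i j k : ℤ) : ℝ) := by
  simp [trip, tripZ, Matrix.det_fin_three, kd_cast]

lemma quad_cast (a b c d i j k l : Fin 7) :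
    quad a b c d i j k l = ((quadZ a b c d i j k l : ℤ) : ℝ) := by
  simp [quad, quadZ, tripZ, Matrix.det_succ_row_zero, Fin.sum_univ_succ, Matrix.det_fin_three,
    kd_cast, Fin.succAbove, show (Fin.castSucc 2 : Fin 4) = 2 from rfl,
    show (Fin.succ 2 : Fin 4) = 3 from rfl,
    show (if (1:Fin 4) < 3 then (1:Fin 4) else 2) = 1 from rfl]
  ring

set_option maxHeartbeats 4000000 in
lemma sigZ : ∀ a b c d : Fin 7,
    (∑ i : Fin 7, (TZ i a b * TZ i c d - TZ i a c * TZ i b d + TZ i a d * TZ i b c))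
      = 2 * (quadZ 2 3 4 5 a b c d - quadZ 0 3 4 6 a b c d - quadZ 0 2 5 6 a b c d) := by
  decide

/-! ### Collapsing sums against `quad` -/

section collapse
variable {M : Type*} [AddCommGroup M] [Module ℝ M]

lemma sum_kd_smul (x : Fin 7) (g : Fin 7 → M) : (∑ i, kd x i • g i) = g x := by
  simp [kd, ite_smul]

lemma sum2 (x y : Fin 7) (G : Fin 7 → Fin 7 → M) :
    (∑ k, ∑ l, (kd x k * kd y l) • G k l) = G x y := by
  have h : ∀ k, (∑ l, (kd x k * kd y l) • G k l) = kd x k • ∑ l, kd y l • G k l := by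
    intro k
    rw [Finset.smul_sum]
    exact Finset.sum_congr rfl fun l _ => by rw [mul_smul]
  simp only [h, sum_kd_smul]

lemma sum2w (x y : Fin 7) (G : Fin 7 → Fin 7 → M) :
    (∑ k, ∑ l, (kd x k * kd y l - kd x l * kd y k) • G k l) = G x y - G y x := by
  have h1 : ∀ k l, (kd x k * kd y l - kd x l * kd y k) • G k l
      = (kd x k * kd y l) • G k l - (kd y k * kd x l) • G k l := by
    intro k l; rw [sub_smul, mul_comm (kd x l)]
  simp only [h1, Finset.sum_sub_distrib, sum2]

lemma sum3 (x y z : Fin 7) (G : Fin 7 → Fin 7 → Fin 7 → M) :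
    (∑ j, ∑ k, ∑ l, trip x y z j k l • G j k l)
      = (G x y z - G x z y) - (G y x z - G y z x) + (G z x y - G z y x) := by
  have hexp : ∀ j k l : Fin 7, trip x y z j k l
      = kd x j * (kd y k * kd z l - kd y l * kd z k)
        - kd y j * (kd x k * kd z l - kd x l * kd z k)
        + kd z j * (kd x k * kd y l - kd x l * kd y k) := by
    intro j k l
    simp [trip, Matrix.det_fin_three]; ring
  have h1 : ∀ j k l, trip x y z j k l • G j k l
      = kd x j • ((kd y k * kd z l - kd y l * kd z k) • G j k l)
        - kd y j • ((kd x k * kd z l - kd x l * kd z k) • G j k l)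
        + kd z j • ((kd x k * kd y l - kd x l * kd y k) • G j k l) := by
    intro j k l; rw [hexp]; rw [add_smul, sub_smul, mul_smul, mul_smul, mul_smul]
  simp only [h1, Finset.sum_add_distrib, Finset.sum_sub_distrib, ← Finset.smul_sum]
  simp only [sum2w, sum_kd_smul]

lemma quad_collapse (a b c d : Fin 7) (F : Fin 7 → Fin 7 → Fin 7 → Fin 7 → M) :
    (∑ i, ∑ j, ∑ k, ∑ l, quad a b c d i j k l • F i j k l)
      = (((F a b c d - F a b d c) - (F a c b d - F a c d b) + (F a d b c - F a d c b))
        - ((F b a c d - F b a d c) - (F b c a d - F b c d a) + (F b d a c - F b d c a))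
        + ((F c a b d - F c a d b) - (F c b a d - F c b d a) + (F c d a b - F c d b a)))
        - ((F d a b c - F d a c b) - (F d b a c - F d b c a) + (F d c a b - F d c b a)) := by
  have hexp : ∀ i j k l : Fin 7, quad a b c d i j k l
      = kd a i * trip b c d j k l - kd b i * trip a c d j k l
        + kd c i * trip a b d j k l - kd d i * trip a b c j k l := by
    intro i j k l
    simp [quad, trip, Matrix.det_succ_row_zero, Fin.sum_univ_succ, Matrix.det_fin_three,
      Fin.succAbove, show (Fin.castSucc 2 : Fin 4) = 2 from rfl,
      show (Fin.succ 2 : Fin 4) = 3 from rfl,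
      show (if (1:Fin 4) < 3 then (1:Fin 4) else 2) = 1 from rfl]
    ring
  have h1 : ∀ i j k l, quad a b c d i j k l • F i j k l
      = kd a i • (trip b c d j k l • F i j k l)
        - kd b i • (trip a c d j k l • F i j k l)
        + kd c i • (trip a b d j k l • F i j k l)
        - kd d i • (trip a b c j k l • F i j k l) := by
    intro i j k l; rw [hexp, sub_smul, add_smul, sub_smul, mul_smul, mul_smul, mul_smul, mul_smul]
  simp only [h1, Finset.sum_add_distrib, Finset.sum_sub_distrib, ← Finset.smul_sum]
  simp only [sum3, sum_kd_smul]

end collapse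

/-! ### Elementary Clifford algebra facts -/

section cliff
variable {Δ : Type*} [NormedAddCommGroup Δ] [InnerProductSpace ℝ Δ]
variable (c : Fin 7 → Δ →ₗ[ℝ] Δ)
  (hcl : ∀ i j ψ, c i (c j ψ) + c j (c i ψ) = if i = j then (-2 : ℝ) • ψ else 0)

include hcl

lemma csq (i : Fin 7) (ψ : Δ) : c i (c i ψ) = -ψ := by
  have h := hcl i i ψ
  simp only [if_pos rfl] at h
  have h2 : (2:ℝ) • c i (c i ψ) = (2:ℝ) • (-ψ) := by
    calc (2:ℝ) • c i (c i ψ) = c i (c i ψ) + c i (c i ψ) := two_smul _ _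
    _ = (-2:ℝ) • ψ := h
    _ = (2:ℝ) • (-ψ) := by module
  exact smul_right_injective Δ (by norm_num) h2

lemma cswap (i j : Fin 7) (h : i ≠ j) (ψ : Δ) : c j (c i ψ) = -(c i (c j ψ)) := by
  have h2 := hcl i j ψ
  rw [if_neg h] at h2
  have := eq_neg_of_add_eq_zero_right h2
  exact this

end cliff


lemma cons_val_five {α : Type*} (a b c d e f g h : α) : ![a,b,c,d,e,f,g,h] 5 = f := rfl
lemma cons_val_six {α : Type*} (a b c d e f g h : α) : ![a,b,c,d,e,f,g,h] 6 = g := rfl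
lemma cons_val_seven {α : Type*} (a b c d e f g h : α) : ![a,b,c,d,e,f,g,h] 7 = h := rfl

set_option maxHeartbeats 4000000 in
/-- For `T = −(e₅₆₇ − e₁₃₅ + e₃₄₇ + e₁₄₆)` on `ℝ⁷`, with
`σ^T = (1/2)Σᵢ (eᵢ⌟T)∧(eᵢ⌟T)` and `dT = −4 e₁₃₆₇`, one has
`σ^T = 2(e₃₄₅₆ − e₁₄₅₇ − e₁₃₆₇)`, and the 4-form `(1/4)dT + (1/2)σ^T` acts in the
8-dimensional real spin representation of `Cl(ℝ⁷)` as a symmetric endomorphism with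
eigenvalues `(2, −4, 2, 0, 2, 0, 2, −4)`. -/
theorem stmt_12_aux {Δ : Type*} [NormedAddCommGroup Δ] [InnerProductSpace ℝ Δ]
    (hdim : Module.finrank ℝ Δ = 8)
    (c : Fin 7 → Δ →ₗ[ℝ] Δ)
    (hcl : ∀ i j ψ, c i (c j ψ) + c j (c i ψ) = if i = j then (-2 : ℝ) • ψ else 0)
    (hsk : ∀ i (ψ φ : Δ), ⟪c i ψ, φ⟫ = - ⟪ψ, c i φ⟫)
    (T : Fin 7 → Fin 7 → Fin 7 → ℝ)
    (hT : T = fun i j k =>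
      -(trip 4 5 6 i j k - trip 0 2 4 i j k + trip 2 3 6 i j k + trip 0 3 5 i j k))
    (sigmaT dT Q : Fin 7 → Fin 7 → Fin 7 → Fin 7 → ℝ)
    (hsigma : sigmaT = fun a b c d => (1 / 2) * ∑ i, wedge22 (T i) (T i) a b c d)
    (hdT : dT = fun a b c d => -4 * quad 0 2 5 6 a b c d)
    (hQ : Q = fun a b c d => (1 / 4) * dT a b c d + (1 / 2) * sigmaT a b c d)
    (A : Δ → Δ)
    (hA : ∀ ψ, A ψ = (1 / 24 : ℝ) •
      ∑ i, ∑ j, ∑ k, ∑ l, Q i j k l • c i (c j (c k (c l ψ)))) :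
    (∀ a b c d, sigmaT a b c d
        = 2 * (quad 2 3 4 5 a b c d - quad 0 3 4 6 a b c d - quad 0 2 5 6 a b c d))
    ∧ (∀ ψ φ : Δ, ⟪A ψ, φ⟫ = ⟪ψ, A φ⟫)
    ∧ ∃ b : OrthonormalBasis (Fin 8) ℝ Δ,
        ∀ m, A (b m) = (![2, -4, 2, 0, 2, 0, 2, -4] : Fin 8 → ℝ) m • b m := by
  classical
  -- abbreviations for sorting Clifford words
  have sq := csq c hcl
  have sw20 := cswap c hcl 0 2 (by decide)
  have sw30 := cswap c hcl 0 3 (by decide)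
  have sw32 := cswap c hcl 2 3 (by decide)
  have sw40 := cswap c hcl 0 4 (by decide)
  have sw42 := cswap c hcl 2 4 (by decide)
  have sw43 := cswap c hcl 3 4 (by decide)
  have sw50 := cswap c hcl 0 5 (by decide)
  have sw52 := cswap c hcl 2 5 (by decide)
  have sw53 := cswap c hcl 3 5 (by decide)
  have sw54 := cswap c hcl 4 5 (by decide)
  have sw60 := cswap c hcl 0 6 (by decide)
  have sw62 := cswap c hcl 2 6 (by decide)
  have sw63 := cswap c hcl 3 6 (by decide)
  have sw64 := cswap c hcl 4 6 (by decide)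
  have sw65 := cswap c hcl 5 6 (by decide)
  -- Part 1 : the σ^T computation
  have part1 : ∀ a b c' d, sigmaT a b c' d
      = 2 * (quad 2 3 4 5 a b c' d - quad 0 3 4 6 a b c' d - quad 0 2 5 6 a b c' d) := by
    intro a b c' d
    have hTZ : ∀ i j k, T i j k = ((TZ i j k : ℤ) : ℝ) := by
      intro i j k
      rw [hT]
      simp only [trip_cast, TZ]
      push_cast
      ring
    have hw : ∀ i : Fin 7, wedge22 (T i) (T i) a b c' d
        = (((2 * (TZ i a b * TZ i c' d - TZ i a c' * TZ i b d + TZ i a d * TZ i b c')) : ℤ) : ℝ) := by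
      intro i
      simp only [wedge22, hTZ]
      push_cast
      ring
    have hs : (∑ i, wedge22 (T i) (T i) a b c' d)
        = (((2 * (2 * (quadZ 2 3 4 5 a b c' d - quadZ 0 3 4 6 a b c' d
            - quadZ 0 2 5 6 a b c' d))) : ℤ) : ℝ) := by
      rw [Finset.sum_congr rfl fun i _ => hw i, ← Int.cast_sum, ← Finset.mul_sum,
        sigZ a b c' d]
    rw [hsigma]
    simp only []
    rw [hs, quad_cast, quad_cast, quad_cast]
    push_cast
    ring
  -- components of the 4-form Q
  have hQval : ∀ i j k l, Q i j k l
      = quad 2 3 4 5 i j k l - quad 0 3 4 6 i j k l - 2 * quad 0 2 5 6 i j k l := by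
    intro i j k l
    rw [hQ]
    simp only [hdT]
    rw [part1 i j k l]
    ring
  -- A as a combination of three Clifford words
  have hAeq : ∀ ψ, A ψ = c 2 (c 3 (c 4 (c 5 ψ))) - c 0 (c 3 (c 4 (c 6 ψ)))
      - (2:ℝ) • c 0 (c 2 (c 5 (c 6 ψ))) := by
    intro ψ
    rw [hA ψ]
    have hsummand : ∀ i j k l : Fin 7, Q i j k l • c i (c j (c k (c l ψ)))
        = quad 2 3 4 5 i j k l • c i (c j (c k (c l ψ)))
          - quad 0 3 4 6 i j k l • c i (c j (c k (c l ψ)))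
          - quad 0 2 5 6 i j k l • ((2:ℝ) • c i (c j (c k (c l ψ)))) := by
      intro i j k l
      rw [hQval]
      module
    simp only [hsummand, Finset.sum_sub_distrib, quad_collapse]
    simp only [sw20, sw30, sw32, sw40, sw42, sw43, sw50, sw52, sw53, sw54, sw60, sw62,
      sw63, sw64, sw65, map_neg, neg_neg, map_smul, smul_neg]
    module
  -- the two commuting involutions
  set Pl : Δ →ₗ[ℝ] Δ := c 2 ∘ₗ c 3 ∘ₗ c 4 ∘ₗ c 5 with hPldef
  set Ql : Δ →ₗ[ℝ] Δ := c 0 ∘ₗ c 3 ∘ₗ c 4 ∘ₗ c 6 with hQldef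
  have hPlapp : ∀ ψ, Pl ψ = c 2 (c 3 (c 4 (c 5 ψ))) := fun ψ => rfl
  have hQlapp : ∀ ψ, Ql ψ = c 0 (c 3 (c 4 (c 6 ψ))) := fun ψ => rfl
  have hPP : ∀ ψ, Pl (Pl ψ) = ψ := by
    intro ψ
    simp only [hPlapp]
    simp only [sw20, sw30, sw32, sw40, sw42, sw43, sw50, sw52, sw53, sw54, sw60, sw62,
      sw63, sw64, sw65, map_neg, neg_neg, sq]
  have hQQ : ∀ ψ, Ql (Ql ψ) = ψ := by
    intro ψ
    simp only [hQlapp]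
    simp only [sw20, sw30, sw32, sw40, sw42, sw43, sw50, sw52, sw53, sw54, sw60, sw62,
      sw63, sw64, sw65, map_neg, neg_neg, sq]
  have hPQc : ∀ ψ, Pl (Ql ψ) = Ql (Pl ψ) := by
    intro ψ
    simp only [hPlapp, hQlapp]
    simp only [sw20, sw30, sw32, sw40, sw42, sw43, sw50, sw52, sw53, sw54, sw60, sw62,
      sw63, sw64, sw65, map_neg, neg_neg, sq]
  have hRPQ : ∀ ψ, c 0 (c 2 (c 5 (c 6 ψ))) = -(Pl (Ql ψ)) := by
    intro ψ
    simp only [hPlapp, hQlapp]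
    simp only [sw20, sw30, sw32, sw40, sw42, sw43, sw50, sw52, sw53, sw54, sw60, sw62,
      sw63, sw64, sw65, map_neg, neg_neg, sq]
  have hAeq' : ∀ ψ, A ψ = Pl ψ - Ql ψ + (2:ℝ) • Pl (Ql ψ) := by
    intro ψ
    rw [hAeq ψ, hRPQ ψ, show c 2 (c 3 (c 4 (c 5 ψ))) = Pl ψ from (hPlapp ψ).symm,
      show c 0 (c 3 (c 4 (c 6 ψ))) = Ql ψ from (hQlapp ψ).symm]
    module
  -- commutation of Pl, Ql with single generators
  have hPc0 : ∀ ψ, Pl (c 0 ψ) = c 0 (Pl ψ) := by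
    intro ψ
    simp only [hPlapp]
    simp only [sw20, sw30, sw32, sw40, sw42, sw43, sw50, sw52, sw53, sw54, sw60, sw62,
      sw63, sw64, sw65, map_neg, neg_neg, sq]
  have hPc2 : ∀ ψ, Pl (c 2 ψ) = -(c 2 (Pl ψ)) := by
    intro ψ
    simp only [hPlapp]
    simp only [sw20, sw30, sw32, sw40, sw42, sw43, sw50, sw52, sw53, sw54, sw60, sw62,
      sw63, sw64, sw65, map_neg, neg_neg, sq]
  have hPc3 : ∀ ψ, Pl (c 3 ψ) = -(c 3 (Pl ψ)) := by
    intro ψ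
    simp only [hPlapp]
    simp only [sw20, sw30, sw32, sw40, sw42, sw43, sw50, sw52, sw53, sw54, sw60, sw62,
      sw63, sw64, sw65, map_neg, neg_neg, sq]
  have hQc0 : ∀ ψ, Ql (c 0 ψ) = -(c 0 (Ql ψ)) := by
    intro ψ
    simp only [hQlapp]
    simp only [sw20, sw30, sw32, sw40, sw42, sw43, sw50, sw52, sw53, sw54, sw60, sw62,
      sw63, sw64, sw65, map_neg, neg_neg, sq]
  have hQc2 : ∀ ψ, Ql (c 2 ψ) = c 2 (Ql ψ) := by
    intro ψ
    simp only [hQlapp]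
    simp only [sw20, sw30, sw32, sw40, sw42, sw43, sw50, sw52, sw53, sw54, sw60, sw62,
      sw63, sw64, sw65, map_neg, neg_neg, sq]
  have hQc3 : ∀ ψ, Ql (c 3 ψ) = -(c 3 (Ql ψ)) := by
    intro ψ
    simp only [hQlapp]
    simp only [sw20, sw30, sw32, sw40, sw42, sw43, sw50, sw52, sw53, sw54, sw60, sw62,
      sw63, sw64, sw65, map_neg, neg_neg, sq]
  -- symmetry
  have hPsym : ∀ ψ φ, ⟪Pl ψ, φ⟫ = ⟪ψ, Pl φ⟫ := by
    intro ψ φ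
    simp only [hPlapp, hsk, neg_neg]
    simp only [sw20, sw30, sw32, sw40, sw42, sw43, sw50, sw52, sw53, sw54, sw60, sw62,
      sw63, sw64, sw65, map_neg, neg_neg, sq, inner_neg_right]
  have hQsym : ∀ ψ φ, ⟪Ql ψ, φ⟫ = ⟪ψ, Ql φ⟫ := by
    intro ψ φ
    simp only [hQlapp, hsk, neg_neg]
    simp only [sw20, sw30, sw32, sw40, sw42, sw43, sw50, sw52, sw53, sw54, sw60, sw62,
      sw63, sw64, sw65, map_neg, neg_neg, sq, inner_neg_right]
  have hAsym : ∀ ψ φ : Δ, ⟪A ψ, φ⟫ = ⟪ψ, A φ⟫ := by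
    intro ψ φ
    rw [hAeq' ψ, hAeq' φ]
    simp only [inner_sub_left, inner_sub_right, inner_add_left, inner_add_right,
      real_inner_smul_left, real_inner_smul_right, hPsym, hQsym, hPQc]
    try ring
  -- finite dimensionality
  haveI hfd : FiniteDimensional ℝ Δ := FiniteDimensional.of_finrank_pos (by omega)
  -- joint eigenspaces
  set E1 : Submodule ℝ Δ :=
    LinearMap.ker (Pl - LinearMap.id) ⊓ LinearMap.ker (Ql - LinearMap.id) with hE1
  set E2 : Submodule ℝ Δ :=
    LinearMap.ker (Pl - LinearMap.id) ⊓ LinearMap.ker (Ql + LinearMap.id) with hE2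
  set E3 : Submodule ℝ Δ :=
    LinearMap.ker (Pl + LinearMap.id) ⊓ LinearMap.ker (Ql - LinearMap.id) with hE3
  set E4 : Submodule ℝ Δ :=
    LinearMap.ker (Pl + LinearMap.id) ⊓ LinearMap.ker (Ql + LinearMap.id) with hE4
  have memE1 : ∀ w : Δ, w ∈ E1 ↔ (Pl w = w ∧ Ql w = w) := by
    intro w
    rw [hE1, Submodule.mem_inf, LinearMap.mem_ker, LinearMap.mem_ker]
    simp [LinearMap.sub_apply, sub_eq_zero]
  have memE2 : ∀ w : Δ, w ∈ E2 ↔ (Pl w = w ∧ Ql w = -w) := by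
    intro w
    rw [hE2, Submodule.mem_inf, LinearMap.mem_ker, LinearMap.mem_ker]
    simp [LinearMap.sub_apply, LinearMap.add_apply, sub_eq_zero, add_eq_zero_iff_eq_neg]
  have memE3 : ∀ w : Δ, w ∈ E3 ↔ (Pl w = -w ∧ Ql w = w) := by
    intro w
    rw [hE3, Submodule.mem_inf, LinearMap.mem_ker, LinearMap.mem_ker]
    simp [LinearMap.sub_apply, LinearMap.add_apply, sub_eq_zero, add_eq_zero_iff_eq_neg]
  have memE4 : ∀ w : Δ, w ∈ E4 ↔ (Pl w = -w ∧ Ql w = -w) := by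
    intro w
    rw [hE4, Submodule.mem_inf, LinearMap.mem_ker, LinearMap.mem_ker]
    simp [LinearMap.add_apply, add_eq_zero_iff_eq_neg]
  have hQPQ : ∀ w : Δ, Ql (Pl (Ql w)) = Pl w := by
    intro w
    rw [← hPQc, hQQ]
  -- the four eigenspaces cover Δ
  have cover : ∀ w : Δ, w ∈ E1 ⊔ E2 ⊔ E3 ⊔ E4 := by
    intro w
    have ha : (4⁻¹:ℝ) • (w + Pl w + Ql w + Pl (Ql w)) ∈ E1 := by
      rw [memE1]
      constructor
      · simp only [map_smul, map_add, hPP, hPQc]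
        module
      · simp only [map_smul, map_add, hQQ, hQPQ, hPQc]
        module
    have hb : (4⁻¹:ℝ) • (w + Pl w - Ql w - Pl (Ql w)) ∈ E2 := by
      rw [memE2]
      constructor
      · simp only [map_smul, map_add, map_sub, hPP, hPQc]
        module
      · simp only [map_smul, map_add, map_sub, hQQ, hQPQ, hPQc]
        module
    have hc : (4⁻¹:ℝ) • (w - Pl w + Ql w - Pl (Ql w)) ∈ E3 := by
      rw [memE3]
      constructor
      · simp only [map_smul, map_add, map_sub, hPP, hPQc]
        module
      · simp only [map_smul, map_add, map_sub, hQQ, hQPQ, hPQc]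
        module
    have hd : (4⁻¹:ℝ) • (w - Pl w - Ql w + Pl (Ql w)) ∈ E4 := by
      rw [memE4]
      constructor
      · simp only [map_smul, map_add, map_sub, hPP, hPQc]
        module
      · simp only [map_smul, map_add, map_sub, hQQ, hQPQ, hPQc]
        module
    have hsum : w = (4⁻¹:ℝ) • (w + Pl w + Ql w + Pl (Ql w))
        + (4⁻¹:ℝ) • (w + Pl w - Ql w - Pl (Ql w))
        + (4⁻¹:ℝ) • (w - Pl w + Ql w - Pl (Ql w))
        + (4⁻¹:ℝ) • (w - Pl w - Ql w + Pl (Ql w)) := by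
      module
    rw [hsum]
    exact Submodule.add_mem _ (Submodule.add_mem _ (Submodule.add_mem _
      (Submodule.mem_sup_left (Submodule.mem_sup_left (Submodule.mem_sup_left ha)))
      (Submodule.mem_sup_left (Submodule.mem_sup_left (Submodule.mem_sup_right hb))))
      (Submodule.mem_sup_left (Submodule.mem_sup_right hc)))
      (Submodule.mem_sup_right hd)
  have htop : E1 ⊔ E2 ⊔ E3 ⊔ E4 = ⊤ := by
    rw [eq_top_iff]
    exact fun w _ => cover w
  have hsupb : ∀ S T' : Submodule ℝ Δ, Module.finrank ℝ (S ⊔ T' : Submodule ℝ Δ)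
      ≤ Module.finrank ℝ S + Module.finrank ℝ T' := by
    intro S T'
    have := Submodule.finrank_sup_add_finrank_inf_eq S T'
    omega
  -- transfer of rank along Clifford generators
  have hrk : ∀ (i : Fin 7) (S T' : Submodule ℝ Δ),
      (∀ w, w ∈ S → c i w ∈ T') → (∀ w, w ∈ T' → -(c i w) ∈ S) →
      Module.finrank ℝ T' = Module.finrank ℝ S := by
    intro i S T' hST hTS
    let e : Δ ≃ₗ[ℝ] Δ := LinearEquiv.ofLinear (c i) (-(c i))
      (by ext ψ; simp [LinearMap.neg_apply, map_neg, sq, neg_neg])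
      (by ext ψ; simp [LinearMap.neg_apply, map_neg, sq, neg_neg])
    have hmap : S.map (e : Δ →ₗ[ℝ] Δ) = T' := by
      apply le_antisymm
      · rintro x ⟨w, hw, rfl⟩
        exact hST w hw
      · intro x hx
        exact Submodule.mem_map.mpr ⟨-(c i x), hTS x hx,
          by show c i (-(c i x)) = x; rw [map_neg, sq, neg_neg]⟩
    rw [← hmap, LinearEquiv.finrank_map_eq]
  have hr2 : Module.finrank ℝ E2 = Module.finrank ℝ E1 := by
    refine hrk 0 E1 E2 (fun w hw => ?_) (fun w hw => ?_)
    · rw [memE2]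
      exact ⟨by rw [hPc0, ((memE1 w).1 hw).1], by rw [hQc0, ((memE1 w).1 hw).2]⟩
    · rw [memE1]
      constructor
      · rw [map_neg, hPc0, ((memE2 w).1 hw).1]
      · rw [map_neg, hQc0, ((memE2 w).1 hw).2, map_neg, neg_neg]
  have hr3 : Module.finrank ℝ E3 = Module.finrank ℝ E1 := by
    refine hrk 2 E1 E3 (fun w hw => ?_) (fun w hw => ?_)
    · rw [memE3]
      exact ⟨by rw [hPc2, ((memE1 w).1 hw).1], by rw [hQc2, ((memE1 w).1 hw).2]⟩
    · rw [memE1]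
      constructor
      · rw [map_neg, hPc2, neg_neg, ((memE3 w).1 hw).1, map_neg]
      · rw [map_neg, hQc2, ((memE3 w).1 hw).2]
  have hr4 : Module.finrank ℝ E4 = Module.finrank ℝ E1 := by
    refine hrk 3 E1 E4 (fun w hw => ?_) (fun w hw => ?_)
    · rw [memE4]
      exact ⟨by rw [hPc3, ((memE1 w).1 hw).1], by rw [hQc3, ((memE1 w).1 hw).2]⟩
    · rw [memE1]
      constructor
      · rw [map_neg, hPc3, neg_neg, ((memE4 w).1 hw).1, map_neg]
      · rw [map_neg, hQc3, neg_neg, ((memE4 w).1 hw).2, map_neg]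
  have hrank8 : Module.finrank ℝ (E1 ⊔ E2 ⊔ E3 ⊔ E4 : Submodule ℝ Δ) = 8 := by
    rw [htop, finrank_top, hdim]
  have hfr2 : 2 ≤ Module.finrank ℝ E1 := by
    have h1 := hsupb (E1 ⊔ E2 ⊔ E3) E4
    have h2 := hsupb (E1 ⊔ E2) E3
    have h3 := hsupb E1 E2
    omega
  -- an orthonormal pair in E1
  have h0 : 0 < Module.finrank ℝ E1 := by omega
  have h1' : 1 < Module.finrank ℝ E1 := by omega
  set ob := stdOrthonormalBasis ℝ E1 with hob
  set u1 : Δ := ((ob ⟨0, h0⟩ : E1) : Δ) with hu1def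
  set u2 : Δ := ((ob ⟨1, h1'⟩ : E1) : Δ) with hu2def
  have hu1mem : Pl u1 = u1 ∧ Ql u1 = u1 := (memE1 _).1 (ob ⟨0, h0⟩).2
  have hu2mem : Pl u2 = u2 ∧ Ql u2 = u2 := (memE1 _).1 (ob ⟨1, h1'⟩).2
  have hon' := ob.orthonormal
  rw [orthonormal_iff_ite] at hon'
  have hu11 : ⟪u1, u1⟫ = 1 := by
    have h := hon' ⟨0, h0⟩ ⟨0, h0⟩
    rw [if_pos rfl, Submodule.coe_inner] at h
    exact h
  have hu22 : ⟪u2, u2⟫ = 1 := by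
    have h := hon' ⟨1, h1'⟩ ⟨1, h1'⟩
    rw [if_pos rfl, Submodule.coe_inner] at h
    exact h
  have hu12 : ⟪u1, u2⟫ = 0 := by
    have h := hon' ⟨0, h0⟩ ⟨1, h1'⟩
    rw [if_neg (by simp), Submodule.coe_inner] at h
    exact h
  have hu21 : ⟪u2, u1⟫ = 0 := by
    rw [real_inner_comm]
    exact hu12
  -- the candidate orthonormal basis
  set v : Fin 8 → Δ := ![u1, c 2 u1, c 3 u1, c 0 u1, u2, c 0 u2, c 3 u2, c 2 u2] with hv
  have hPv : ∀ m, Pl (v m) = (![1,-1,-1,1,1,1,-1,-1] : Fin 8 → ℝ) m • v m := by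
    intro m
    fin_cases m <;>
      simp [hv, cons_val_five, cons_val_six, cons_val_seven, hPc0, hPc2, hPc3, hu1mem.1, hu2mem.1]
  have hQv : ∀ m, Ql (v m) = (![1,1,-1,-1,1,-1,-1,1] : Fin 8 → ℝ) m • v m := by
    intro m
    fin_cases m <;>
      simp [hv, cons_val_five, cons_val_six, cons_val_seven, hQc0, hQc2, hQc3, hu1mem.2, hu2mem.2]
  have hAv : ∀ m, A (v m)
      = ((![1,-1,-1,1,1,1,-1,-1] : Fin 8 → ℝ) m - (![1,1,-1,-1,1,-1,-1,1] : Fin 8 → ℝ) m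
        + 2 * ((![1,-1,-1,1,1,1,-1,-1] : Fin 8 → ℝ) m * (![1,1,-1,-1,1,-1,-1,1] : Fin 8 → ℝ) m))
          • v m := by
    intro m
    rw [hAeq' (v m), hQv m, map_smul, hPv m]
    module
  have horthP : ∀ m n : Fin 8,
      (![1,-1,-1,1,1,1,-1,-1] : Fin 8 → ℝ) m ≠ (![1,-1,-1,1,1,1,-1,-1] : Fin 8 → ℝ) n →
      ⟪v m, v n⟫ = 0 := by
    intro m n hmn
    have h1 := hPsym (v m) (v n)
    rw [hPv m, hPv n, real_inner_smul_left, real_inner_smul_right] at h1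
    have h2 : ((![1,-1,-1,1,1,1,-1,-1] : Fin 8 → ℝ) m - (![1,-1,-1,1,1,1,-1,-1] : Fin 8 → ℝ) n)
        * ⟪v m, v n⟫ = 0 := by linarith
    rcases mul_eq_zero.mp h2 with h | h
    · exact absurd (by linarith) hmn
    · exact h
  have horthQ : ∀ m n : Fin 8,
      (![1,1,-1,-1,1,-1,-1,1] : Fin 8 → ℝ) m ≠ (![1,1,-1,-1,1,-1,-1,1] : Fin 8 → ℝ) n →
      ⟪v m, v n⟫ = 0 := by
    intro m n hmn
    have h1 := hQsym (v m) (v n)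
    rw [hQv m, hQv n, real_inner_smul_left, real_inner_smul_right] at h1
    have h2 : ((![1,1,-1,-1,1,-1,-1,1] : Fin 8 → ℝ) m - (![1,1,-1,-1,1,-1,-1,1] : Fin 8 → ℝ) n)
        * ⟪v m, v n⟫ = 0 := by linarith
    rcases mul_eq_zero.mp h2 with h | h
    · exact absurd (by linarith) hmn
    · exact h
  have hinner_c : ∀ (i : Fin 7) (x y : Δ), ⟪c i x, c i y⟫ = ⟪x, y⟫ := by
    intro i x y
    rw [hsk, sq, inner_neg_right, neg_neg]
  have hortho : Orthonormal ℝ v := by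
    rw [orthonormal_iff_ite]
    intro m n
    by_cases hmn : m = n
    · subst hmn
      rw [if_pos rfl]
      fin_cases m <;> simp [-inner_self_eq_norm_sq_to_K, hv, cons_val_five, cons_val_six, cons_val_seven, hinner_c, hu11, hu22]
    · rw [if_neg hmn]
      fin_cases m <;> fin_cases n <;>
        first
          | exact absurd rfl hmn
          | (refine horthP _ _ ?_; norm_num [cons_val_five, cons_val_six, cons_val_seven]; done)
          | (refine horthQ _ _ ?_; norm_num [cons_val_five, cons_val_six, cons_val_seven]; done)
          | simp [hv, cons_val_five, cons_val_six, cons_val_seven, hinner_c, hu12, hu21]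
  have hsp : ⊤ ≤ Submodule.span ℝ (Set.range v) := by
    rw [hortho.linearIndependent.span_eq_top_of_card_eq_finrank (by rw [hdim]; simp)]
  refine ⟨part1, hAsym, OrthonormalBasis.mk hortho hsp, ?_⟩
  intro m
  rw [show (OrthonormalBasis.mk hortho hsp) m = v m from
    congrFun (OrthonormalBasis.coe_mk hortho hsp) m, hAv m]
  fin_cases m <;> norm_num [cons_val_five, cons_val_six, cons_val_seven]


theorem stmt_12 {Δ : Type*} [NormedAddCommGroup Δ] [InnerProductSpace ℝ Δ]
    (hdim : Module.finrank ℝ Δ = 8)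
    (c : Fin 7 → Δ →ₗ[ℝ] Δ)
    (hcl : ∀ i j ψ, c i (c j ψ) + c j (c i ψ) = if i = j then (-2 : ℝ) • ψ else 0)
    (hsk : ∀ i (ψ φ : Δ), ⟪c i ψ, φ⟫ = - ⟪ψ, c i φ⟫)
    (T : Fin 7 → Fin 7 → Fin 7 → ℝ)
    (hT : T = fun i j k =>
      -(trip 4 5 6 i j k - trip 0 2 4 i j k + trip 2 3 6 i j k + trip 0 3 5 i j k))
    (sigmaT dT Q : Fin 7 → Fin 7 → Fin 7 → Fin 7 → ℝ)
    (hsigma : sigmaT = fun a b c d => (1 / 2) * ∑ i, wedge22 (T i) (T i) a b c d)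
    (hdT : dT = fun a b c d => -4 * quad 0 2 5 6 a b c d)
    (hQ : Q = fun a b c d => (1 / 4) * dT a b c d + (1 / 2) * sigmaT a b c d)
    (A : Δ → Δ)
    (hA : ∀ ψ, A ψ = (1 / 24 : ℝ) •
      ∑ i, ∑ j, ∑ k, ∑ l, Q i j k l • c i (c j (c k (c l ψ)))) :
    (∀ a b c d, sigmaT a b c d
        = 2 * (quad 2 3 4 5 a b c d - quad 0 3 4 6 a b c d - quad 0 2 5 6 a b c d))
    ∧ (∀ ψ φ : Δ, ⟪A ψ, φ⟫ = ⟪ψ, A φ⟫)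
    ∧ ∃ b : OrthonormalBasis (Fin 8) ℝ Δ,
        ∀ m, A (b m) = (![2, -4, 2, 0, 2, 0, 2, -4] : Fin 8 → ℝ) m • b m :=
  stmt_12_aux hdim c hcl hsk T hT sigmaT dT Q hsigma hdT hQ A hA
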